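/- Let x(t) = (x₁(t),…,x_N(t)) solve ẋ_i = K Σ_{j∈N_i} A_{ij}(x_j - x_i) - α(t)(h_i h_iᵀ x_i - z_i h_i) over a fixed connected graph with Laplacian L, where x(t) is bounded, α(t) → 0, and K > 0. Let x̄(t) = (1/N)Σ_i x_i(t). Then lim_{t→∞} ‖x(t) - 1_N ⊗ x̄(t)‖ = 0, i.e., the flow achieves consensus. -/

import Mathlib

open Matrix Filter Finset


lemma consensus_gap {N : ℕ} (A : Matrix (Fin N) (Fin N) ℝ)
    (hAnonneg : ∀ i j, 0 ≤ A i j)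
    (G : SimpleGraph (Fin N)) (hG : ∀ i j, G.Adj i j ↔ i ≠ j ∧ 0 < A i j)
    (hconn : G.Connected) :
    ∃ lam > (0:ℝ), ∀ v : Fin N → ℝ, (∑ i, v i = 0) →
      lam * ∑ i, (v i)^2 ≤ (1/2) * ∑ i, ∑ j, A i j * (v i - v j)^2 := by
  classical
  set Q : (Fin N → ℝ) → ℝ := fun v => (1/2) * ∑ i, ∑ j, A i j * (v i - v j)^2 with hQdef
  have hQ0 : ∀ v, 0 ≤ Q v := by
    intro v
    have : (0:ℝ) ≤ ∑ i, ∑ j, A i j * (v i - v j)^2 :=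
      Finset.sum_nonneg fun i _ => Finset.sum_nonneg fun j _ =>
        mul_nonneg (hAnonneg i j) (sq_nonneg _)
    simpa [hQdef] using by linarith
  -- Q v = 0 and sum-zero imply v = 0
  have hQzero : ∀ v : Fin N → ℝ, (∑ i, v i = 0) → Q v = 0 → ∀ i, v i = 0 := by
    intro v hsum hQ
    have hterm : ∀ i ∈ Finset.univ, ∑ j, A i j * (v i - v j)^2 = 0 := by
      have h1 : ∑ i, ∑ j, A i j * (v i - v j)^2 = 0 := by
        have := hQ; rw [hQdef] at this; simp at this; linarith
      exact (Finset.sum_eq_zero_iff_of_nonneg (fun i _ =>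
        Finset.sum_nonneg fun j _ => mul_nonneg (hAnonneg i j) (sq_nonneg _))).mp h1
    have hedge : ∀ i j, G.Adj i j → v i = v j := by
      intro i j hij
      obtain ⟨-, hA⟩ := (hG i j).mp hij
      have := (Finset.sum_eq_zero_iff_of_nonneg (fun j _ =>
        mul_nonneg (hAnonneg i j) (sq_nonneg _))).mp (hterm i (Finset.mem_univ i)) j
        (Finset.mem_univ j)
      have h2 : (v i - v j)^2 = 0 := by
        rcases mul_eq_zero.mp this with h | h
        · exact absurd h (ne_of_gt hA)
        · exact h
      have := sq_eq_zero_iff.mp h2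
      linarith
    have hreach : ∀ i j : Fin N, v i = v j := by
      intro i j
      obtain ⟨w⟩ := hconn.preconnected i j
      induction w with
      | nil => rfl
      | cons hadj p ih => exact (hedge _ _ hadj).trans ih
    -- constant and sum zero
    intro i
    have hN : (0:ℕ) < N := Fin.pos_iff_nonempty.mpr hconn.nonempty
    have : ∑ j, v j = (N:ℝ) * v i := by
      rw [Finset.sum_congr rfl fun j _ => hreach j i]
      simp [Finset.sum_const, mul_comm]
    have hN' : (N:ℝ) ≠ 0 := by positivity
    have h3 : (N:ℝ) * v i = 0 := by rw [← this, hsum]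
    exact (mul_eq_zero.mp h3).resolve_left hN'
  set S : Set (Fin N → ℝ) := {v | ∑ i, v i = 0 ∧ ∑ i, (v i)^2 = 1} with hSdef
  -- normalization
  have hnorm : ∀ v : Fin N → ℝ, (∑ i, v i = 0) → 0 < ∑ i, (v i)^2 →
      (fun i => v i / Real.sqrt (∑ i, (v i)^2)) ∈ S ∧
      Q (fun i => v i / Real.sqrt (∑ i, (v i)^2)) = Q v / (∑ i, (v i)^2) := by
    intro v hsum hs
    set s := ∑ i, (v i)^2 with hsdef
    have hsq : Real.sqrt s ^ 2 = s := Real.sq_sqrt hs.le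
    have hs0 : Real.sqrt s ≠ 0 := by positivity
    refine ⟨⟨?_, ?_⟩, ?_⟩
    · rw [← Finset.sum_div, hsum, zero_div]
    · have : ∀ i, (v i / Real.sqrt s)^2 = (v i)^2 / s := by
        intro i; rw [div_pow, hsq]
      rw [Finset.sum_congr rfl fun i _ => this i, ← Finset.sum_div, ← hsdef,
        div_self hs.ne']
    · have : ∀ i j, A i j * (v i / Real.sqrt s - v j / Real.sqrt s)^2
          = (A i j * (v i - v j)^2) / s := by
        intro i j
        rw [div_sub_div_same, div_pow, hsq, mul_div_assoc]
      simp only [hQdef]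
      rw [Finset.sum_congr rfl fun i _ => Finset.sum_congr rfl fun j _ => this i j]
      rw [Finset.sum_congr rfl fun i (_ : i ∈ Finset.univ) => (Finset.sum_div _ _ _).symm,
        ← Finset.sum_div]
      ring
  by_cases hS : S.Nonempty
  · -- compactness
    have hclosed : IsClosed S := by
      have h1 : IsClosed {v : Fin N → ℝ | ∑ i, v i = 0} :=
        isClosed_eq (continuous_finset_sum _ fun i _ => continuous_apply i) continuous_const
      have h2 : IsClosed {v : Fin N → ℝ | ∑ i, (v i)^2 = 1} :=
        isClosed_eq (continuous_finset_sum _ fun i _ => (continuous_apply i).pow 2) continuous_const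
      exact h1.inter h2
    have hbounded : Bornology.IsBounded S := by
      apply Bornology.IsBounded.subset (Metric.isBounded_closedBall (x := (0 : Fin N → ℝ)) (r := 1))
      intro v hv
      simp only [Metric.mem_closedBall, dist_zero_right]
      rw [pi_norm_le_iff_of_nonneg zero_le_one]
      intro i
      have h1 : (v i)^2 ≤ 1 := by
        have := Finset.single_le_sum (f := fun i => (v i)^2)
          (fun j _ => sq_nonneg (v j)) (Finset.mem_univ i)
        rw [hv.2] at this; exact this
      rw [Real.norm_eq_abs]
      exact (sq_le_one_iff_abs_le_one (v i)).mp h1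
    have hcompact : IsCompact S := Metric.isCompact_of_isClosed_isBounded hclosed hbounded
    have hQcont : ContinuousOn Q S := by
      apply Continuous.continuousOn
      apply Continuous.mul continuous_const
      exact continuous_finset_sum _ fun i _ => continuous_finset_sum _ fun j _ =>
        Continuous.mul continuous_const (((continuous_apply i).sub (continuous_apply j)).pow 2)
    obtain ⟨v₀, hv₀S, hmin⟩ := hcompact.exists_isMinOn hS hQcont
    have hlampos : 0 < Q v₀ := by
      rcases lt_or_eq_of_le (hQ0 v₀) with hlt | heq
      · exact hlt
      · exfalso
        have := hQzero v₀ hv₀S.1 heq.symm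
        have h1 : ∑ i, (v₀ i)^2 = 0 := by
          apply Finset.sum_eq_zero; intro i _; rw [this i]; ring
        rw [hv₀S.2] at h1; norm_num at h1
    refine ⟨Q v₀, hlampos, fun v hsum => ?_⟩
    rcases eq_or_lt_of_le (Finset.sum_nonneg fun i (_ : i ∈ Finset.univ) => sq_nonneg (v i)) with hz | hpos
    · rw [← hz, mul_zero]
      simpa [hQdef] using hQ0 v
    · obtain ⟨hmem, hQw⟩ := hnorm v hsum hpos
      have h1 : Q v₀ ≤ Q v / (∑ i, (v i)^2) := by
        have h0 := hmin hmem
        simp only [Set.mem_setOf_eq] at h0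
        rw [hQw] at h0
        exact h0
      have h2 : Q v₀ * (∑ i, (v i)^2) ≤ Q v := by
        rw [← div_mul_cancel₀ (Q v) hpos.ne']
        exact mul_le_mul_of_nonneg_right h1 (by positivity)
      simpa [hQdef] using h2
  · refine ⟨1, one_pos, fun v hsum => ?_⟩
    have hs : ∑ i, (v i)^2 = 0 := by
      by_contra hne
      have hpos : 0 < ∑ i, (v i)^2 :=
        lt_of_le_of_ne (Finset.sum_nonneg fun i _ => sq_nonneg _) (Ne.symm hne)
      exact hS ⟨_, (hnorm v hsum hpos).1⟩
    rw [hs, mul_zero]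
    have := hQ0 v
    simpa [hQdef] using this


lemma lap_identity {N : ℕ} (A : Matrix (Fin N) (Fin N) ℝ)
    (hs : ∀ i j, A i j = A j i) (v : Fin N → ℝ) :
    ∑ i, ∑ j, A i j * (v i * (v j - v i)) = -((1/2) * ∑ i, ∑ j, A i j * (v i - v j)^2) := by
  have swap1 : ∑ i, ∑ j, A i j * (v j)^2 = ∑ i, ∑ j, A i j * (v i)^2 := by
    rw [Finset.sum_comm]
    exact Finset.sum_congr rfl fun i _ => Finset.sum_congr rfl fun j _ => by rw [hs]
  have e1 : ∀ i j, A i j * (v i * (v j - v i))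
      = A i j * (v i * v j) - A i j * (v i)^2 := fun i j => by ring
  have e2 : ∀ i j, A i j * (v i - v j)^2
      = A i j * (v i)^2 - 2 * (A i j * (v i * v j)) + A i j * (v j)^2 := fun i j => by ring
  simp only [e1, e2, Finset.sum_sub_distrib, Finset.sum_add_distrib, ← Finset.mul_sum]
  rw [swap1]
  ring_nf

lemma gronwall_tendsto_zero (V W β : ℝ → ℝ) (c : ℝ) (hc : 0 < c)
    (hVd : ∀ t ≥ (0:ℝ), HasDerivAt V (W t) t)
    (hV0 : ∀ t, 0 ≤ V t)
    (hβ : Tendsto β atTop (nhds 0))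
    (hle : ∀ t ≥ (0:ℝ), W t ≤ -c * V t + β t) :
    Tendsto V atTop (nhds 0) := by
  rw [Metric.tendsto_atTop]
  intro ε hε
  -- pick T with β small
  have hβev : ∀ᶠ t in atTop, β t < c * (ε/4) := by
    exact hβ.eventually (gt_mem_nhds (by positivity))
  obtain ⟨T₀, hT₀⟩ := hβev.exists_forall_of_atTop
  set T := max T₀ 0 with hTdef
  have hT0 : (0:ℝ) ≤ T := le_max_right _ _
  -- g is antitone on [T, ∞)
  set g : ℝ → ℝ := fun t => Real.exp (c*t) * (V t - ε/4) with hgdef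
  have hg : ∀ t ≥ T, HasDerivAt g
      (Real.exp (c*t) * c * (V t - ε/4) + Real.exp (c*t) * W t) t := by
    intro t ht
    have h1 : HasDerivAt (fun t => Real.exp (c*t)) (Real.exp (c*t) * c) t := by
      simpa using ((hasDerivAt_id t).const_mul c).exp
    exact h1.mul ((hVd t (le_trans hT0 ht)).sub_const (ε/4))
  have hganti : AntitoneOn g (Set.Ici T) := by
    apply antitoneOn_of_deriv_nonpos (convex_Ici T)
    · intro t ht
      exact ((hg t ht).continuousAt).continuousWithinAt
    · rw [interior_Ici]
      intro t ht
      exact (hg t (le_of_lt ht)).differentiableAt.differentiableWithinAt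
    · rw [interior_Ici]
      intro t ht
      rw [(hg t (le_of_lt ht)).deriv]
      have hWt : W t ≤ -c * V t + β t := hle t (le_trans hT0 (le_of_lt ht))
      have hβt : β t < c * (ε/4) := hT₀ t (le_trans (le_max_left _ _) (le_of_lt ht))
      have hexp : 0 < Real.exp (c*t) := Real.exp_pos _
      nlinarith [hexp]
  -- bound V t for t ≥ T
  have hbound : ∀ t ≥ T, V t ≤ ε/4 + Real.exp (c*T - c*t) * V T := by
    intro t ht
    have := hganti (Set.self_mem_Ici) (Set.mem_Ici.mpr ht) ht
    simp only [hgdef] at this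
    have hexp : 0 < Real.exp (c*t) := Real.exp_pos _
    have h1 : V t - ε/4 ≤ Real.exp (c*T) / Real.exp (c*t) * (V T - ε/4) := by
      rw [div_mul_eq_mul_div, le_div_iff₀ hexp]
      linarith [this]
    have h2 : Real.exp (c*T) / Real.exp (c*t) = Real.exp (c*T - c*t) := by
      rw [Real.exp_sub]
    rw [h2] at h1
    have h3 : Real.exp (c*T - c*t) * (V T - ε/4) ≤ Real.exp (c*T - c*t) * V T := by
      have : (0:ℝ) < ε/4 := by linarith
      nlinarith [Real.exp_pos (c*T - c*t)]
    linarith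
  -- the decay term tends to 0
  have hdecay : Tendsto (fun t => Real.exp (c*T - c*t) * V T) atTop (nhds 0) := by
    have h1 : Tendsto (fun t : ℝ => c*T - c*t) atTop atBot := by
      have h2 : Tendsto (fun t : ℝ => c*t) atTop atTop :=
        Tendsto.const_mul_atTop hc tendsto_id
      have h3 : Tendsto (fun t : ℝ => -(c*t)) atTop atBot :=
        tendsto_neg_atTop_atBot.comp h2
      have h4 := tendsto_atBot_add_const_left atTop (c*T) h3
      simpa [sub_eq_add_neg] using h4
    have h5 := (Real.tendsto_exp_atBot.comp h1).mul_const (V T)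
    simpa using h5
  have hdecev : ∀ᶠ t in atTop, Real.exp (c*T - c*t) * V T < ε/4 :=
    hdecay.eventually (gt_mem_nhds (by positivity))
  obtain ⟨T₁, hT₁⟩ := hdecev.exists_forall_of_atTop
  refine ⟨max T T₁, fun t ht => ?_⟩
  have htT : T ≤ t := le_trans (le_max_left _ _) ht
  have htT₁ : T₁ ≤ t := le_trans (le_max_right _ _) ht
  have := hbound t htT
  have := hT₁ t htT₁
  rw [Real.dist_eq, sub_zero, abs_of_nonneg (hV0 t)]
  linarith

theorem flow_achieves_consensus
    (N m : ℕ)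
    (A : Matrix (Fin N) (Fin N) ℝ)
    (hAsymm : ∀ i j, A i j = A j i)
    (hAnonneg : ∀ i j, 0 ≤ A i j)
    (hAdiag : ∀ i, A i i = 0)
    (G : SimpleGraph (Fin N))
    (hG : ∀ i j, G.Adj i j ↔ i ≠ j ∧ 0 < A i j)
    (hconn : G.Connected)
    (h : Fin N → (Fin m → ℝ)) (z : Fin N → ℝ)
    (K : ℝ) (hK : 0 < K)
    (α : ℝ → ℝ) (hαcont : Continuous α) (hαpos : ∀ t ≥ (0:ℝ), 0 < α t)
    (hα0 : Tendsto α atTop (nhds 0))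
    (x : ℝ → Fin N → (Fin m → ℝ))
    (hx : ∀ i, ∀ t ≥ (0:ℝ), HasDerivAt (fun s => x s i)
      (K • (∑ j, A i j • (x t j - x t i)) -
        α t • ((h i ⬝ᵥ x t i) • h i - z i • h i)) t)
    (hbdd : ∃ C : ℝ, ∀ t ≥ (0:ℝ), ∀ i, ‖x t i‖ ≤ C) :
    ∀ i, Tendsto (fun t => x t i - (N : ℝ)⁻¹ • ∑ j, x t j) atTop (nhds 0) := by
  classical
  obtain ⟨C, hC⟩ := hbdd
  have hNe : Nonempty (Fin N) := hconn.nonempty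
  have hNpos : 0 < (N:ℝ) := by exact_mod_cast Fin.pos_iff_nonempty.mpr hNe
  obtain ⟨lam, hlam, hgap⟩ := consensus_gap A hAnonneg G hG hconn
  have hC0 : 0 ≤ C := le_trans (norm_nonneg _) (hC 0 le_rfl (Classical.arbitrary _))
  have hxb : ∀ t ≥ (0:ℝ), ∀ i k, |x t i k| ≤ C := by
    intro t ht i k
    calc |x t i k| = ‖x t i k‖ := (Real.norm_eq_abs _).symm
    _ ≤ ‖x t i‖ := norm_le_pi_norm _ k
    _ ≤ C := hC t ht i
  -- average coordinate and its bound
  set a : ℝ → Fin m → ℝ := fun t k => (N:ℝ)⁻¹ * ∑ j, x t j k with hadef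
  have hab : ∀ t ≥ (0:ℝ), ∀ k, |a t k| ≤ C := by
    intro t ht k
    have h1 : |∑ j, x t j k| ≤ ∑ j : Fin N, C :=
      le_trans (Finset.abs_sum_le_sum_abs _ _) (Finset.sum_le_sum fun j _ => hxb t ht j k)
    simp only [hadef, abs_mul, abs_inv, Nat.abs_cast]
    rw [Finset.sum_const, Finset.card_univ, Fintype.card_fin, nsmul_eq_mul] at h1
    calc ((N:ℝ))⁻¹ * |∑ j, x t j k| ≤ ((N:ℝ))⁻¹ * ((N:ℝ) * C) := by
          apply mul_le_mul_of_nonneg_left h1 (by positivity)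
    _ = C := by field_simp
  have hyb : ∀ t ≥ (0:ℝ), ∀ i k, |x t i k - a t k| ≤ 2*C := by
    intro t ht i k
    calc |x t i k - a t k| ≤ |x t i k| + |a t k| := abs_sub _ _
    _ ≤ 2*C := by linarith [hxb t ht i k, hab t ht k]
  -- sum of deviations is zero
  have hysum : ∀ t k, ∑ i, (x t i k - a t k) = 0 := by
    intro t k
    rw [Finset.sum_sub_distrib, Finset.sum_const, Finset.card_univ, Fintype.card_fin,
      nsmul_eq_mul]
    simp only [hadef]
    field_simp
    ring
  -- scalar derivative data
  set Fk : ℝ → Fin N → Fin m → ℝ := fun t i k =>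
    K * (∑ j, A i j * (x t j k - x t i k)) -
      α t * ((h i ⬝ᵥ x t i) * h i k - z i * h i k) with hFkdef
  have hxd : ∀ i k, ∀ t ≥ (0:ℝ), HasDerivAt (fun s => x s i k) (Fk t i k) t := by
    intro i k t ht
    have h0 := (hasDerivAt_pi.mp (hx i t ht)) k
    refine h0.congr_deriv ?_
    simp [hFkdef, Finset.sum_apply, Finset.mul_sum]
  set Ak : ℝ → Fin m → ℝ := fun t k => (N:ℝ)⁻¹ * ∑ j, Fk t j k with hAkdef
  have had : ∀ k, ∀ t ≥ (0:ℝ), HasDerivAt (fun s => a s k) (Ak t k) t := by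
    intro k t ht
    exact (HasDerivAt.fun_sum (fun j _ => hxd j k t ht)).const_mul _
  have hyd : ∀ i k, ∀ t ≥ (0:ℝ), HasDerivAt (fun s => x s i k - a s k)
      (Fk t i k - Ak t k) t := fun i k t ht => (hxd i k t ht).sub (had k t ht)
  set V : ℝ → ℝ := fun t => ∑ i, ∑ k, (x t i k - a t k)^2 with hVdef
  set W : ℝ → ℝ := fun t => ∑ i, ∑ k, 2 * (x t i k - a t k) * (Fk t i k - Ak t k) with hWdef
  have hVd : ∀ t ≥ (0:ℝ), HasDerivAt V (W t) t := by
    intro t ht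
    have h0 : HasDerivAt (fun s => ∑ i, ∑ k, (x s i k - a s k)^2)
        (∑ i, ∑ k, (2:ℕ) * (x t i k - a t k)^(2-1) * (Fk t i k - Ak t k)) t :=
      HasDerivAt.fun_sum fun i _ => HasDerivAt.fun_sum fun k _ => (hyd i k t ht).pow 2
    convert h0 using 1
    simp [hWdef]
  have hV0 : ∀ t, 0 ≤ V t :=
    fun t => Finset.sum_nonneg fun i _ => Finset.sum_nonneg fun k _ => sq_nonneg _
  -- the perturbation constant
  set D : ℝ := ∑ i, (2*C) * ((∑ l, |h i l|) * C + |z i|) * (∑ k, |h i k|) with hDdef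
  have hD0 : 0 ≤ D := Finset.sum_nonneg fun i _ => by positivity
  -- structural decomposition of W
  have hWsplit : ∀ t, W t =
      2*K*(∑ k, ∑ i, ∑ j, A i j * ((x t i k - a t k) * ((x t j k - a t k) - (x t i k - a t k))))
      - 2 * α t * (∑ i, ∑ k, (x t i k - a t k) * ((h i ⬝ᵥ x t i) * h i k - z i * h i k)) := by
    intro t
    have e1 : ∀ i k, 2 * (x t i k - a t k) * (Fk t i k - Ak t k)
        = 2*K*(∑ j, A i j * ((x t i k - a t k) * ((x t j k - a t k) - (x t i k - a t k))))
          - 2 * α t * ((x t i k - a t k) * ((h i ⬝ᵥ x t i) * h i k - z i * h i k))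
          - 2 * ((x t i k - a t k) * Ak t k) := by
      intro i k
      have h0 : (x t i k - a t k) * ∑ j, A i j * (x t j k - x t i k)
          = ∑ j, A i j * ((x t i k - a t k) * ((x t j k - a t k) - (x t i k - a t k))) := by
        rw [Finset.mul_sum]
        exact Finset.sum_congr rfl fun j _ => by ring
      simp only [hFkdef]
      linear_combination (2:ℝ) * K * h0
    have hZ : ∑ i, ∑ k, ((x t i k - a t k) * Ak t k) = 0 := by
      rw [Finset.sum_comm]
      apply Finset.sum_eq_zero
      intro k _
      rw [← Finset.sum_mul, hysum t k, zero_mul]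
    calc W t = ∑ i, ∑ k,
        (2*K*(∑ j, A i j * ((x t i k - a t k) * ((x t j k - a t k) - (x t i k - a t k))))
          - 2 * α t * ((x t i k - a t k) * ((h i ⬝ᵥ x t i) * h i k - z i * h i k))
          - 2 * ((x t i k - a t k) * Ak t k)) := by
          simp only [hWdef]
          exact Finset.sum_congr rfl fun i _ => Finset.sum_congr rfl fun k _ => e1 i k
    _ = (∑ i, ∑ k, 2*K*(∑ j, A i j * ((x t i k - a t k) * ((x t j k - a t k) - (x t i k - a t k)))))
        - (∑ i, ∑ k, 2 * α t * ((x t i k - a t k) * ((h i ⬝ᵥ x t i) * h i k - z i * h i k)))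
        - (∑ i, ∑ k, 2 * ((x t i k - a t k) * Ak t k)) := by
          simp [Finset.sum_sub_distrib]
    _ = 2*K*(∑ i, ∑ k, ∑ j, A i j * ((x t i k - a t k) * ((x t j k - a t k) - (x t i k - a t k))))
        - 2 * α t * (∑ i, ∑ k, (x t i k - a t k) * ((h i ⬝ᵥ x t i) * h i k - z i * h i k))
        - 2 * (∑ i, ∑ k, ((x t i k - a t k) * Ak t k)) := by
          simp only [← Finset.mul_sum]
    _ = _ := by rw [hZ, mul_zero, sub_zero, Finset.sum_comm]
  -- the key differential inequality
  have hWle : ∀ t ≥ (0:ℝ), W t ≤ -(2*K*lam) * V t + α t * (2*D) := by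
    intro t ht
    -- consensus part
    have hSA : (∑ k, ∑ i, ∑ j, A i j * ((x t i k - a t k) * ((x t j k - a t k) - (x t i k - a t k))))
        ≤ -(lam * V t) := by
      have hk : ∀ k : Fin m, ∑ i, ∑ j, A i j *
          ((x t i k - a t k) * ((x t j k - a t k) - (x t i k - a t k)))
          ≤ -(lam * ∑ i, (x t i k - a t k)^2) := by
        intro k
        have hid := lap_identity A hAsymm (fun i => x t i k - a t k)
        have hg := hgap (fun i => x t i k - a t k) (hysum t k)
        rw [hid]
        linarith
      calc (∑ k, ∑ i, ∑ j, A i j * ((x t i k - a t k) * ((x t j k - a t k) - (x t i k - a t k))))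
          ≤ ∑ k, -(lam * ∑ i, (x t i k - a t k)^2) := Finset.sum_le_sum fun k _ => hk k
      _ = -(lam * V t) := by
          simp only [Finset.sum_neg_distrib, ← Finset.mul_sum, hVdef]
          rw [Finset.sum_comm]
    -- perturbation part
    have hP : |∑ i, ∑ k, (x t i k - a t k) * ((h i ⬝ᵥ x t i) * h i k - z i * h i k)| ≤ D := by
      calc |∑ i, ∑ k, (x t i k - a t k) * ((h i ⬝ᵥ x t i) * h i k - z i * h i k)|
          ≤ ∑ i, |∑ k, (x t i k - a t k) * ((h i ⬝ᵥ x t i) * h i k - z i * h i k)| :=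
            Finset.abs_sum_le_sum_abs _ _
      _ ≤ D := by
          apply Finset.sum_le_sum
          intro i _
          have hdot : |h i ⬝ᵥ x t i| ≤ (∑ l, |h i l|) * C := by
            calc |h i ⬝ᵥ x t i| ≤ ∑ l, |h i l * x t i l| := by
                  rw [dotProduct]
                  exact Finset.abs_sum_le_sum_abs _ _
            _ ≤ ∑ l, |h i l| * C := by
                  apply Finset.sum_le_sum
                  intro l _
                  rw [abs_mul]
                  exact mul_le_mul_of_nonneg_left (hxb t ht i l) (abs_nonneg _)
            _ = (∑ l, |h i l|) * C := by rw [Finset.sum_mul]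
          calc |∑ k, (x t i k - a t k) * ((h i ⬝ᵥ x t i) * h i k - z i * h i k)|
              ≤ ∑ k, |(x t i k - a t k) * ((h i ⬝ᵥ x t i) * h i k - z i * h i k)| :=
                Finset.abs_sum_le_sum_abs _ _
          _ ≤ ∑ k, (2*C) * (((∑ l, |h i l|) * C + |z i|) * |h i k|) := by
                apply Finset.sum_le_sum
                intro k _
                rw [abs_mul]
                apply mul_le_mul (hyb t ht i k) ?_ (abs_nonneg _) (by positivity)
                calc |(h i ⬝ᵥ x t i) * h i k - z i * h i k|
                    = |(h i ⬝ᵥ x t i) - z i| * |h i k| := by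
                      rw [← abs_mul]; ring_nf
                _ ≤ ((∑ l, |h i l|) * C + |z i|) * |h i k| := by
                      apply mul_le_mul_of_nonneg_right ?_ (abs_nonneg _)
                      calc |(h i ⬝ᵥ x t i) - z i| ≤ |h i ⬝ᵥ x t i| + |z i| := abs_sub _ _
                      _ ≤ (∑ l, |h i l|) * C + |z i| := by linarith [hdot]
          _ = (2*C) * ((∑ l, |h i l|) * C + |z i|) * (∑ k, |h i k|) := by
                rw [Finset.mul_sum]
                congr 1
                ext k
                ring
    have hα : 0 < α t := hαpos t ht
    rw [hWsplit t]
    have h1 : 2*K*(∑ k, ∑ i, ∑ j, A i j * ((x t i k - a t k) * ((x t j k - a t k) - (x t i k - a t k))))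
        ≤ 2*K*(-(lam * V t)) := by
      apply mul_le_mul_of_nonneg_left hSA (by positivity)
    have h2 : -(2 * α t * (∑ i, ∑ k, (x t i k - a t k) * ((h i ⬝ᵥ x t i) * h i k - z i * h i k)))
        ≤ α t * (2*D) := by
      have := neg_abs_le (∑ i, ∑ k, (x t i k - a t k) * ((h i ⬝ᵥ x t i) * h i k - z i * h i k))
      nlinarith [hP, hα.le]
    nlinarith [h1, h2]
  -- apply the convergence lemma
  have hβ : Tendsto (fun t => α t * (2*D)) atTop (nhds 0) := by
    simpa using hα0.mul_const (2*D)
  have hVtend : Tendsto V atTop (nhds 0) :=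
    gronwall_tendsto_zero V W _ (2*K*lam) (by positivity) hVd hV0 hβ hWle
  -- conclude coordinatewise
  intro i
  rw [tendsto_zero_iff_norm_tendsto_zero]
  apply squeeze_zero (g := fun t => Real.sqrt (V t)) (fun t => norm_nonneg _)
  · intro t
    rw [pi_norm_le_iff_of_nonneg (Real.sqrt_nonneg _)]
    intro k
    have hcoord : (x t i - (N:ℝ)⁻¹ • ∑ j, x t j) k = x t i k - a t k := by
      simp [hadef, Finset.sum_apply]
    rw [hcoord, Real.norm_eq_abs, ← Real.sqrt_sq_eq_abs]
    apply Real.sqrt_le_sqrt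
    calc (x t i k - a t k)^2 ≤ ∑ k', (x t i k' - a t k')^2 :=
          Finset.single_le_sum (f := fun k' => (x t i k' - a t k')^2)
            (fun k' _ => sq_nonneg _) (Finset.mem_univ k)
    _ ≤ V t :=
          Finset.single_le_sum (f := fun i' => ∑ k', (x t i' k' - a t k')^2)
            (fun i' _ => Finset.sum_nonneg fun k' _ => sq_nonneg _) (Finset.mem_univ i)
  · have := (Real.continuous_sqrt.tendsto 0).comp hVtend
    simpa [Function.comp_def] using this
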